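/- For every real x, the function J₂(x) := (1/(2π)) ∫₀^{2π} cos(2t)·cos(x·sin t) dt satisfies J₂(x) ≤ x²/8. -/

import Mathlib

open Real

/-- The second Bessel function of the first kind, via its integral representation. -/
noncomputable def J2 (x : ℝ) : ℝ :=
  (1/(2*π)) * ∫ t in (0:ℝ)..(2*π), Real.cos (2*t) * Real.cos (x * Real.sin t)

lemma g_mono (x a b : ℝ) (ha : 0 ≤ a) (hab : a ≤ b) :
    Real.cos (x*a) + x^2*a^2/2 ≤ Real.cos (x*b) + x^2*b^2/2 := by
  have h := Real.cos_sub_cos (x*a) (x*b)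
  have h1 : |Real.sin ((x*a + x*b)/2)| ≤ |x| * ((a+b)/2) := by
    refine Real.abs_sin_le_abs.trans_eq ?_
    rw [show (x*a+x*b)/2 = x*((a+b)/2) by ring, abs_mul]
    congr 1
    exact abs_of_nonneg (by linarith)
  have h2 : |Real.sin ((x*a - x*b)/2)| ≤ |x| * ((b-a)/2) := by
    refine Real.abs_sin_le_abs.trans_eq ?_
    rw [show (x*a-x*b)/2 = x*((a-b)/2) by ring, abs_mul]
    congr 1
    rw [abs_of_nonpos (by linarith)]; ring
  set A := Real.sin ((x*a + x*b)/2) with hA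
  set B := Real.sin ((x*a - x*b)/2) with hB
  have hp : |A * B| ≤ (|x| * ((a+b)/2)) * (|x| * ((b-a)/2)) := by
    rw [abs_mul]
    exact mul_le_mul h1 h2 (abs_nonneg _) (mul_nonneg (abs_nonneg _) (by linarith))
  have hx : |x| * |x| = x^2 := by rw [← sq, sq_abs]
  have he : (|x| * ((a+b)/2)) * (|x| * ((b-a)/2)) = x^2 * (b^2 - a^2)/4 := by
    calc (|x| * ((a+b)/2)) * (|x| * ((b-a)/2)) = (|x| * |x|) * ((a+b)*(b-a)/4) := by ring
    _ = x^2 * (b^2 - a^2)/4 := by rw [hx]; ring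
  have hn : -(A*B) ≤ |A*B| := neg_le_abs _
  rw [he] at hp
  nlinarith [hp, hn, h]

/-- Pointwise inequality: cos(2t) * (g(sin t) - g(√2/2)) ≤ 0. -/
lemma pointwise (x t : ℝ) :
    Real.cos (2*t) * (Real.cos (x * Real.sin t) + x^2 * Real.sin t^2/2
      - (Real.cos (x*(Real.sqrt 2/2)) + x^2 * (Real.sqrt 2/2)^2/2)) ≤ 0 := by
  have hs2 : (Real.sqrt 2/2)^2 = 1/2 := by
    rw [div_pow, Real.sq_sqrt (by norm_num : (2:ℝ) ≥ 0)]; norm_num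
  have hs2nn : (0:ℝ) ≤ Real.sqrt 2/2 := by positivity
  set s := Real.sin t with hsdef
  have hcos2 : Real.cos (2*t) = 1 - 2*s^2 := by
    rw [Real.cos_two_mul', Real.sin_sq]; ring
  have hcs : Real.cos (x * s) = Real.cos (x * |s|) := by
    rcases abs_choice s with h | h
    · rw [h]
    · rw [h, mul_neg, Real.cos_neg]
  rcases le_or_gt (s^2) (1/2) with h | h
  · -- cos 2t ≥ 0, g(|s|) ≤ g(√2/2)
    have habs : |s| ≤ Real.sqrt 2/2 := by
      have hsq : s^2 ≤ (Real.sqrt 2/2)^2 := by rw [hs2]; exact h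
      exact abs_le.mpr (abs_le_of_sq_le_sq' hsq hs2nn)
    have hm := g_mono x |s| (Real.sqrt 2/2) (abs_nonneg s) habs
    rw [sq_abs] at hm
    rw [← hcs] at hm
    have h1 : 0 ≤ Real.cos (2*t) := by rw [hcos2]; linarith
    have h2 : Real.cos (x * s) + x^2 * s^2/2
        - (Real.cos (x*(Real.sqrt 2/2)) + x^2 * (Real.sqrt 2/2)^2/2) ≤ 0 := by linarith
    exact mul_nonpos_of_nonneg_of_nonpos h1 h2
  · have habs : Real.sqrt 2/2 ≤ |s| := by
      have hsq : (Real.sqrt 2/2)^2 ≤ |s|^2 := by rw [sq_abs, hs2]; linarith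
      nlinarith [abs_nonneg s, hs2nn]
    have hm := g_mono x (Real.sqrt 2/2) |s| hs2nn habs
    rw [sq_abs, ← hcs] at hm
    have h1 : Real.cos (2*t) ≤ 0 := by rw [hcos2]; linarith
    have h2 : 0 ≤ Real.cos (x * s) + x^2 * s^2/2
        - (Real.cos (x*(Real.sqrt 2/2)) + x^2 * (Real.sqrt 2/2)^2/2) := by linarith
    exact mul_nonpos_of_nonpos_of_nonneg h1 h2

theorem J2_upper_bound (x : ℝ) : J2 x ≤ x^2/8 := by
  have hpi : (0:ℝ) < π := Real.pi_pos
  set c2 := Real.cos (x*(Real.sqrt 2/2)) + x^2 * (Real.sqrt 2/2)^2/2 with hc2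
  set A : ℝ → ℝ := fun t => c2 * Real.cos (2*t) - (x^2/2) * (Real.cos (2*t) * Real.sin t^2)
    with hAdef
  set B : ℝ → ℝ := fun t =>
    Real.cos (2*t) * (Real.cos (x * Real.sin t) + x^2 * Real.sin t^2/2 - c2) with hBdef
  have hsplit : ∀ t, Real.cos (2*t) * Real.cos (x * Real.sin t) = A t + B t := by
    intro t; simp only [hAdef, hBdef]; ring
  -- integral of A via FTC
  set F : ℝ → ℝ := fun t =>
    c2 * (Real.sin (2*t)/2) - (x^2/2) * (Real.sin (2*t)/4 - t/4 - Real.sin (4*t)/16)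
    with hFdef
  have hderiv : ∀ t, HasDerivAt F (A t) t := by
    intro t
    have m2 : HasDerivAt (fun t : ℝ => 2*t) 2 t := by
      simpa using (hasDerivAt_id t).const_mul (2:ℝ)
    have m4 : HasDerivAt (fun t : ℝ => 4*t) 4 t := by
      simpa using (hasDerivAt_id t).const_mul (4:ℝ)
    have h2 : HasDerivAt (fun t : ℝ => Real.sin (2*t)) (Real.cos (2*t) * 2) t :=
      (Real.hasDerivAt_sin (2*t)).comp t m2
    have h4 : HasDerivAt (fun t : ℝ => Real.sin (4*t)) (Real.cos (4*t) * 4) t :=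
      (Real.hasDerivAt_sin (4*t)).comp t m4
    have hid : HasDerivAt (fun t : ℝ => t) 1 t := hasDerivAt_id t
    have h := ((h2.div_const 2).const_mul c2).sub
      ((((h2.div_const 4).sub (hid.div_const 4)).sub (h4.div_const 16)).const_mul (x^2/2))
    refine h.congr_deriv ?_
    have hc4 : Real.cos (4*t) = 2 * Real.cos (2*t)^2 - 1 := by
      rw [show (4:ℝ)*t = 2*(2*t) by ring, Real.cos_two_mul]
    have hst : Real.sin t^2 = 1/2 - Real.cos (2*t)/2 := by
      rw [Real.cos_two_mul']; rw [Real.sin_sq]; ring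
    simp only [hAdef]
    rw [hst, hc4]; ring
  have hIA : (∫ t in (0:ℝ)..(2*π), A t) = π * x^2/4 := by
    rw [intervalIntegral.integral_eq_sub_of_hasDerivAt (fun t _ => hderiv t) ?_]
    · have e1 : Real.sin (2*(2*π)) = 0 := by
        rw [show 2*(2*π) = (4:ℕ)*π by push_cast; ring]; exact Real.sin_nat_mul_pi 4
      have e2 : Real.sin (4*(2*π)) = 0 := by
        rw [show 4*(2*π) = (8:ℕ)*π by push_cast; ring]; exact Real.sin_nat_mul_pi 8
      simp only [hFdef, e1, e2, mul_zero, Real.sin_zero]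
      ring
    · apply Continuous.intervalIntegrable
      simp only [hAdef]
      fun_prop
  have hBcont : Continuous B := by simp only [hBdef]; fun_prop
  have hIB : (∫ t in (0:ℝ)..(2*π), B t) ≤ 0 := by
    have h0 : (0:ℝ) ≤ ∫ t in (0:ℝ)..(2*π), -B t := by
      apply intervalIntegral.integral_nonneg_of_forall (by positivity)
      intro u
      have := pointwise x u
      simp only [hBdef, hc2]
      linarith
    rw [intervalIntegral.integral_neg] at h0
    linarith
  have hI : (∫ t in (0:ℝ)..(2*π), Real.cos (2*t) * Real.cos (x * Real.sin t)) ≤ π * x^2/4 := by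
    have heq : (∫ t in (0:ℝ)..(2*π), Real.cos (2*t) * Real.cos (x * Real.sin t))
        = (∫ t in (0:ℝ)..(2*π), A t) + ∫ t in (0:ℝ)..(2*π), B t := by
      rw [← intervalIntegral.integral_add]
      · exact intervalIntegral.integral_congr fun t _ => hsplit t
      · apply Continuous.intervalIntegrable; simp only [hAdef]; fun_prop
      · exact hBcont.intervalIntegrable _ _
    rw [heq, hIA]; linarith
  have hpos : (0:ℝ) < 1/(2*π) := by positivity
  calc J2 x ≤ (1/(2*π)) * (π * x^2/4) := by
        exact mul_le_mul_of_nonneg_left hI hpos.le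
    _ = x^2/8 := by field_simp; ring
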